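/- Stein's lemma (univariate case): Let γ denote the standard Gaussian measure N(0,1) on ℝ. If g : ℝ → ℝ is differentiable, its derivative g' is integrable with respect to γ, and the function z ↦ z·g(z) is integrable with respect to γ, then ∫ g'(z) dγ(z) = ∫ z·g(z) dγ(z). -/

import Mathlib

open MeasureTheory ProbabilityTheory Filter Set Real
open scoped ENNReal NNReal

lemma stein_aux_top {f : ℝ → ℝ} {L : ℝ} (hf : Integrable (fun z => z * f z))
    (h : Tendsto f atTop (nhds L)) : L = 0 := by
  by_contra hL
  have h2 : (0:ℝ) < |L| / 2 := by positivity
  have hev : ∀ᶠ z in atTop, |L| / 2 < |f z| :=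
    h.abs.eventually_const_lt (by linarith [abs_pos.mpr hL])
  obtain ⟨M, hM⟩ := (hev.and (eventually_ge_atTop (1:ℝ))).exists_forall_of_atTop
  have hconst : Integrable (fun _ : ℝ => |L| / 2) (volume.restrict (Ioi M)) := by
    refine (hf.restrict (s := Ioi M)).mono aestronglyMeasurable_const ?_
    rw [ae_restrict_iff' measurableSet_Ioi]
    refine Filter.Eventually.of_forall fun z hz => ?_
    obtain ⟨h1, hz1⟩ := hM z (le_of_lt hz)
    have hzabs : (1:ℝ) ≤ |z| := le_trans hz1 (le_abs_self z)
    have : |L| / 2 ≤ |z| * |f z| :=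
      le_trans (le_of_eq (one_mul _).symm)
        (mul_le_mul hzabs (le_of_lt h1) (le_of_lt h2) (abs_nonneg z))
    simpa [Real.norm_eq_abs, abs_mul, abs_of_nonneg (le_of_lt h2)] using this
  rcases integrable_const_iff.mp hconst with h0 | hfin
  · exact absurd h0 (ne_of_gt h2)
  · have := hfin.measure_univ_lt_top; simp [Real.volume_Ioi] at this

lemma stein_aux_bot {f : ℝ → ℝ} {L : ℝ} (hf : Integrable (fun z => z * f z))
    (h : Tendsto f atBot (nhds L)) : L = 0 := by
  have hf' : Integrable (fun z => z * f (-z)) volume := by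
    have heq : (fun z : ℝ => z * f (-z)) = fun z => -((-z) * f (-z)) := by
      funext z; ring
    rw [heq]
    exact hf.comp_neg.neg
  exact stein_aux_top hf' (h.comp tendsto_neg_atTop_atBot)

theorem stein_lemma_univariate (g : ℝ → ℝ) (hg : Differentiable ℝ g)
    (hg' : Integrable (deriv g) (gaussianReal 0 1))
    (hzg : Integrable (fun z => z * g z) (gaussianReal 0 1)) :
    ∫ z, deriv g z ∂(gaussianReal 0 1) = ∫ z, z * g z ∂(gaussianReal 0 1) := by
  set φ : ℝ → ℝ := gaussianPDFReal 0 1 with hφdef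
  have hφnn : ∀ z, 0 ≤ φ z := gaussianPDFReal_nonneg 0 1
  have hφmeas : Measurable φ := measurable_gaussianPDFReal 0 1
  have hmeas : gaussianReal 0 1 = volume.withDensity (fun z => ENNReal.ofReal (φ z)) :=
    gaussianReal_of_var_ne_zero 0 one_ne_zero
  -- transfer of integrability and integrals
  have key : ∀ f : ℝ → ℝ, Integrable f (gaussianReal 0 1) ↔
      Integrable (fun z => f z * φ z) volume := by
    intro f
    rw [hmeas, integrable_withDensity_iff hφmeas.ennreal_ofReal
      (Filter.Eventually.of_forall fun x => ENNReal.ofReal_lt_top)]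
    exact integrable_congr (Filter.Eventually.of_forall fun x => by
      simp [ENNReal.toReal_ofReal (hφnn x)])
  have keyI : ∀ f : ℝ → ℝ, ∫ z, f z ∂(gaussianReal 0 1) = ∫ z, f z * φ z := by
    intro f
    rw [hmeas]
    have hrw : (fun z => ENNReal.ofReal (φ z)) = fun z => ((φ z).toNNReal : ℝ≥0∞) := rfl
    rw [hrw, integral_withDensity_eq_integral_smul hφmeas.real_toNNReal]
    refine integral_congr_ae (Filter.Eventually.of_forall fun z => ?_)
    simp [NNReal.smul_def, Real.coe_toNNReal _ (hφnn z), mul_comm]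
  -- derivative of the gaussian density
  have hφd : ∀ z : ℝ, HasDerivAt φ (-z * φ z) z := by
    intro z
    have h0 : HasDerivAt (fun x : ℝ => (x - 0)^2) (2*(z-0)) z := by
      simpa using ((hasDerivAt_id z).sub_const 0).fun_pow 2
    have h1 : HasDerivAt (fun x : ℝ => -(x - 0)^2 / (2 * ((1:ℝ≥0):ℝ))) (-z) z := by
      have := (h0.neg).div_const (2 * ((1:ℝ≥0):ℝ))
      refine this.congr_deriv ?_
      push_cast; ring
    have h2 := (h1.exp).const_mul (√(2 * π * ((1:ℝ≥0):ℝ)))⁻¹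
    have hfun : (fun x : ℝ => (√(2 * π * ((1:ℝ≥0):ℝ)))⁻¹ *
        Real.exp (-(x - 0)^2 / (2 * ((1:ℝ≥0):ℝ)))) = φ := by
      funext x
      simp only [hφdef, gaussianPDFReal]
    rw [← hfun]
    refine h2.congr_deriv ?_
    beta_reduce
    ring
  set F : ℝ → ℝ := fun z => g z * φ z with hFdef
  set D : ℝ → ℝ := fun z => deriv g z * φ z - z * (g z * φ z) with hDdef
  have hFd : ∀ z : ℝ, HasDerivAt F (D z) z := by
    intro z
    have := ((hg z).hasDerivAt).mul (hφd z)
    refine this.congr_deriv ?_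
    simp only [hDdef]
    ring
  have hg'φ : Integrable (fun z => deriv g z * φ z) volume := (key _).mp hg'
  have hzgφ : Integrable (fun z => (z * g z) * φ z) volume := (key _).mp hzg
  have hD : Integrable D volume := by
    refine (hg'φ.sub hzgφ).congr (Filter.Eventually.of_forall fun z => ?_)
    simp only [Pi.sub_apply, hDdef]; ring
  have hFTC : ∀ a b : ℝ, ∫ z in a..b, D z = F b - F a := fun a b =>
    intervalIntegral.integral_eq_sub_of_hasDerivAt (fun x _ => hFd x) hD.intervalIntegrable
  have htop : Tendsto F atTop (nhds (F 0 + ∫ z in Ioi (0:ℝ), D z)) := by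
    have h1 : Tendsto (fun b => ∫ z in (0:ℝ)..b, D z) atTop (nhds (∫ z in Ioi (0:ℝ), D z)) :=
      intervalIntegral_tendsto_integral_Ioi 0 hD.integrableOn tendsto_id
    have h2 : (fun b => F 0 + ∫ z in (0:ℝ)..b, D z) = F := by
      funext b; rw [hFTC 0 b]; ring
    have h3 := h1.const_add (F 0)
    rwa [h2] at h3
  have hbot : Tendsto F atBot (nhds (F 0 - ∫ z in Iic (0:ℝ), D z)) := by
    have h1 : Tendsto (fun a => ∫ z in a..(0:ℝ), D z) atBot (nhds (∫ z in Iic (0:ℝ), D z)) :=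
      intervalIntegral_tendsto_integral_Iic 0 hD.integrableOn tendsto_id
    have h2 : (fun a => F 0 - ∫ z in a..(0:ℝ), D z) = F := by
      funext a; rw [hFTC a 0]; ring
    have h3 := h1.const_sub (F 0)
    rwa [h2] at h3
  have hzF : Integrable (fun z => z * F z) volume := by
    refine hzgφ.congr (Filter.Eventually.of_forall fun z => ?_)
    simp only [hFdef]; ring
  have hLtop : F 0 + ∫ z in Ioi (0:ℝ), D z = 0 := stein_aux_top hzF htop
  have hLbot : F 0 - ∫ z in Iic (0:ℝ), D z = 0 := stein_aux_bot hzF hbot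
  have hDint : ∫ z, D z = 0 := by
    rw [← intervalIntegral.integral_Iic_add_Ioi hD.integrableOn hD.integrableOn]
    linarith
  have hzgφ' : Integrable (fun z => z * (g z * φ z)) volume := by
    refine hzgφ.congr (Filter.Eventually.of_forall fun z => by ring)
  have hsub : ∫ z, D z = (∫ z, deriv g z * φ z) - ∫ z, z * (g z * φ z) :=
    integral_sub hg'φ hzgφ'
  have hmain : ∫ z, deriv g z * φ z = ∫ z, (z * g z) * φ z := by
    have h3 : ∫ z, z * (g z * φ z) = ∫ z, (z * g z) * φ z :=
      integral_congr_ae (Filter.Eventually.of_forall fun z => by ring)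
    rw [hDint] at hsub
    linarith [hsub, h3]
  rw [keyI (deriv g), keyI (fun z => z * g z)]
  exact hmain
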